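/- arXiv:2010.12113 — 4 statements merged into one kernel-verified Lean document; each statement's English description precedes it below -/
import Mathlib

section
/- Let α1, θ^lo, F1, H1^up be reals with H1^up > 0, F1 > 0, θ^lo < α1 and θ^lo ≤ α1 − F1/H1^up. Define H₁ = {(f, θ, H, u) ∈ ℝ^4 : 0 ≤ f ≤ F1, θ^lo ≤ θ ≤ α1 − f/H1^up, u = f·θ, and H = f/(α1 − θ) if θ < α1 while 0 ≤ H ≤ H1^up if θ = α1}. Let T*(λ, t) = λ^2/(α1·λ − t) for λ > 0 with t/λ ∈ [θ^lo, α1 − F1/H1^up] and T*(0, 0) = 0 (the perspective of t ↦ 1/(α1 − t)), and let Q(λ, t) = t^2/λ for λ > 0 with Q(0, 0) = 0 (the perspective of t ↦ t^2). Then the convex hull of H₁ equals the projection onto (f, θ, H, u) of the set of tuples (f, θ, H, u, θ^a, θ^b, θ^c, λ^a, λ^b, λ^c) ∈ ℝ^10 satisfying: H1^up·λ^b + F1·T*(λ^c, θ^c) ≤ H ≤ H1^up·(θ^a − θ^lo·λ^a)/(α1 − θ^lo) + H1^up·λ^b + F1·λ^c/(α1 − θ^lo) + H1^up·(θ^c −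 θ^lo·λ^c)/(α1 − θ^lo); H1^up·(α1 − F1/H1^up)·(α1·λ^b − θ^b) + F1·θ^c ≤ u ≤ H1^up·(α1·θ^b − Q(λ^b, θ^b)) + F1·θ^c; θ^lo·λ^a ≤ θ^a ≤ α1·λ^a; (α1 − F1/H1^up)·λ^b ≤ θ^b ≤ α1·λ^b; θ^lo·λ^c ≤ θ^c ≤ (α1 − F1/H1^up)·λ^c; f = H1^up·(α1·λ^b − θ^b) + F1·λ^c; θ = θ^a + θ^b + θ^c; λ^a + λ^b + λ^c = 1; and λ^a, λ^b, λ^c ≥ 0. -/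
/-- Totalized perspective of `t ↦ 1/(α1 − t)`: `T*(l, t) = l²/(α1·l − t)` for `l > 0`,
and `0` at `l = 0` (consistent with `T*(0,0) = 0`). -/
noncomputable def Tstar (a1 l t : ℝ) : ℝ :=
  if 0 < l then l ^ 2 / (a1 * l - t) else 0

/-- Totalized perspective of `t ↦ t²`: `Q(l, t) = t²/l` for `l > 0`, and `0` at
`l = 0` (consistent with `Q(0,0) = 0`). -/
noncomputable def Qpersp (l t : ℝ) : ℝ :=
  if 0 < l then t ^ 2 / l else 0

lemma Tstar_smul (a1 : ℝ) {c : ℝ} (hc : 0 ≤ c) (l t : ℝ) :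
    Tstar a1 (c * l) (c * t) = c * Tstar a1 l t := by
  rcases eq_or_lt_of_le hc with h | hc
  · simp [Tstar, ← h]
  unfold Tstar
  by_cases hl : 0 < l
  · rw [if_pos (by positivity), if_pos hl]
    rcases eq_or_ne (a1 * l - t) 0 with h | h
    · rw [show a1 * (c * l) - c * t = c * (a1 * l - t) by ring, h, mul_zero, div_zero,
        div_zero, mul_zero]
    · have h2 : a1 * (c * l) - c * t = c * (a1 * l - t) := by ring
      rw [h2]
      field_simp
  · rw [if_neg, if_neg hl, mul_zero]
    intro h2
    exact hl (by nlinarith)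

lemma Qpersp_smul {c : ℝ} (hc : 0 ≤ c) (l t : ℝ) :
    Qpersp (c * l) (c * t) = c * Qpersp l t := by
  rcases eq_or_lt_of_le hc with h | hc
  · simp [Qpersp, ← h]
  unfold Qpersp
  by_cases hl : 0 < l
  · rw [if_pos (by positivity), if_pos hl]
    field_simp
  · rw [if_neg, if_neg hl, mul_zero]
    intro h2
    exact hl (by nlinarith)

lemma Tstar_add (a1 l t l' t' : ℝ) (hl : 0 ≤ l) (hl' : 0 ≤ l')
    (ht : 0 < l → t < a1 * l) (h0 : l = 0 → t = 0)
    (ht' : 0 < l' → t' < a1 * l') (h0' : l' = 0 → t' = 0) :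
    Tstar a1 (l + l') (t + t') ≤ Tstar a1 l t + Tstar a1 l' t' := by
  rcases eq_or_lt_of_le hl with h | hl
  · rw [← h, h0 h.symm, zero_add, zero_add]
    simp [Tstar]
  rcases eq_or_lt_of_le hl' with h | hl'
  · rw [← h, h0' h.symm, add_zero, add_zero]
    simp [Tstar]
  have hs : 0 < a1 * l - t := by have := ht hl; linarith
  have hs' : 0 < a1 * l' - t' := by have := ht' hl'; linarith
  unfold Tstar
  rw [if_pos (by linarith), if_pos hl, if_pos hl']
  rw [div_add_div _ _ hs.ne' hs'.ne', div_le_div_iff₀ (by linarith) (by positivity)]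
  nlinarith [sq_nonneg (l * (a1 * l' - t') - l' * (a1 * l - t)), mul_pos hs hs']

lemma Qpersp_add (l t l' t' : ℝ) (hl : 0 ≤ l) (hl' : 0 ≤ l')
    (h0 : l = 0 → t = 0) (h0' : l' = 0 → t' = 0) :
    Qpersp (l + l') (t + t') ≤ Qpersp l t + Qpersp l' t' := by
  rcases eq_or_lt_of_le hl with h | hl
  · rw [← h, h0 h.symm, zero_add, zero_add]
    simp [Qpersp]
  rcases eq_or_lt_of_le hl' with h | hl'
  · rw [← h, h0' h.symm, add_zero, add_zero]
    simp [Qpersp]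
  unfold Qpersp
  rw [if_pos (by linarith), if_pos hl, if_pos hl']
  rw [div_add_div _ _ hl.ne' hl'.ne', div_le_div_iff₀ (by linarith) (by positivity)]
  nlinarith [sq_nonneg (t * l' - t' * l), mul_pos hl hl']


def Sset (a1 tlo F1 H1up : ℝ) : Set (ℝ × ℝ × ℝ × ℝ) :=
  {p : ℝ × ℝ × ℝ × ℝ |
    0 ≤ p.1 ∧ p.1 ≤ F1 ∧ tlo ≤ p.2.1 ∧ p.2.1 ≤ a1 - p.1 / H1up ∧
    p.2.2.2 = p.1 * p.2.1 ∧
    (p.2.1 < a1 → p.2.2.1 = p.1 / (a1 - p.2.1)) ∧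
    (p.2.1 = a1 → 0 ≤ p.2.2.1 ∧ p.2.2.1 ≤ H1up)}

lemma memA {a1 tlo F1 H1up : ℝ} (hH : 0 < H1up) (hF : 0 < F1)
    {x : ℝ} (hx1 : tlo ≤ x) (hx2 : x ≤ a1) :
    ((0 : ℝ), x, (0 : ℝ), (0 : ℝ)) ∈ Sset a1 tlo F1 H1up :=
  ⟨le_refl _, hF.le, hx1, by simpa using hx2, by simp, fun h => by simp,
    fun h => ⟨le_refl _, hH.le⟩⟩

lemma memTop {a1 tlo F1 H1up : ℝ} (hH : 0 < H1up) (hF : 0 < F1) (htlo : tlo < a1) :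
    ((0 : ℝ), a1, H1up, (0 : ℝ)) ∈ Sset a1 tlo F1 H1up :=
  ⟨le_refl _, hF.le, htlo.le, by simp, by simp, fun h => absurd h (lt_irrefl _),
    fun _ => ⟨hH.le, le_refl _⟩⟩

lemma memC {a1 tlo F1 H1up : ℝ} (hH : 0 < H1up) (hF : 0 < F1)
    {x : ℝ} (hx1 : tlo ≤ x) (hx2 : x ≤ a1 - F1 / H1up) :
    (F1, x, F1 / (a1 - x), F1 * x) ∈ Sset a1 tlo F1 H1up := by
  have hd : 0 < F1 / H1up := div_pos hF hH
  have hxa : x < a1 := by linarith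
  exact ⟨hF.le, le_refl _, hx1, by simpa using hx2, rfl, fun _ => rfl,
    fun h => absurd h hxa.ne⟩

lemma memB {a1 tlo F1 H1up : ℝ} (hH : 0 < H1up) (hF : 0 < F1)
    (htlo' : tlo ≤ a1 - F1 / H1up)
    {x : ℝ} (hx1 : a1 - F1 / H1up ≤ x) (hx2 : x ≤ a1) :
    (H1up * (a1 - x), x, H1up, H1up * (a1 - x) * x) ∈ Sset a1 tlo F1 H1up := by
  have h1 : 0 ≤ a1 - x := by linarith
  have h2 : H1up * (a1 - x) ≤ F1 := by
    have h3 : a1 - x ≤ F1 / H1up := by linarith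
    rw [le_div_iff₀ hH] at h3; linarith
  refine ⟨by positivity, h2, le_trans htlo' hx1, ?_, rfl, fun h => ?_, fun h => ?_⟩
  · show x ≤ a1 - H1up * (a1 - x) / H1up
    have h4 : H1up * (a1 - x) / H1up = a1 - x := by
      rw [mul_comm, mul_div_assoc, div_self hH.ne', mul_one]
    rw [h4]; linarith
  · show H1up = H1up * (a1 - x) / (a1 - x)
    have hne : a1 - x ≠ 0 := by simp only at h; exact fun hc => absurd h (by simp; linarith)
    rw [eq_comm, mul_div_assoc, div_self hne, mul_one]
  · exact ⟨hH.le, le_refl _⟩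

lemma combo3_mem {s : Set (ℝ × ℝ × ℝ × ℝ)} {a b c : ℝ × ℝ × ℝ × ℝ}
    (ha : a ∈ convexHull ℝ s) (hb : b ∈ convexHull ℝ s) (hc : c ∈ convexHull ℝ s)
    {w1 w2 w3 : ℝ} (h1 : 0 ≤ w1) (h2 : 0 ≤ w2) (h3 : 0 ≤ w3) (hs : w1 + w2 + w3 = 1) :
    w1 • a + w2 • b + w3 • c ∈ convexHull ℝ s := by
  have hconv := convex_convexHull ℝ s
  have H := hconv.sum_mem (t := (Finset.univ : Finset (Fin 3))) (w := ![w1, w2, w3])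
    (z := ![a, b, c]) ?_ ?_ ?_
  · simpa [Fin.sum_univ_three] using H
  · intro i _; fin_cases i <;> simpa
  · simp [Fin.sum_univ_three, hs]
  · intro i _; fin_cases i <;> simpa

lemma hullA {a1 tlo F1 H1up : ℝ} (hH : 0 < H1up) (hF : 0 < F1) (htlo : tlo < a1)
    {x h : ℝ} (hx1 : tlo ≤ x) (hx2 : x ≤ a1) (hh0 : 0 ≤ h)
    (hh1 : h * (a1 - tlo) ≤ H1up * (x - tlo)) :
    ((0 : ℝ), x, h, (0 : ℝ)) ∈ convexHull ℝ (Sset a1 tlo F1 H1up) := by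
  have hB : (0 : ℝ) < a1 - tlo := by linarith
  rcases eq_or_lt_of_le hx1 with hx | hx
  · have hh : h = 0 := le_antisymm (by nlinarith) hh0
    rw [hh, ← hx]
    exact subset_convexHull ℝ _ (memA hH hF (le_refl _) htlo.le)
  · have he : (0 : ℝ) < H1up * (x - tlo) := by nlinarith
    set w : ℝ := h * (a1 - tlo) / (H1up * (x - tlo)) with hw
    set r : ℝ := (a1 - x) / (a1 - tlo) with hr
    have hw0 : 0 ≤ w := by positivity
    have hw1 : w ≤ 1 := by rw [hw, div_le_one he]; nlinarith
    have hr0 : 0 ≤ r := by apply div_nonneg <;> linarith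
    have hr1 : r ≤ 1 := by rw [hr, div_le_one hB]; linarith
    have key : ((0 : ℝ), x, h, (0 : ℝ)) =
        (1 - w) • ((0 : ℝ), x, (0 : ℝ), (0 : ℝ)) + (w * r) • ((0 : ℝ), tlo, (0 : ℝ), (0 : ℝ))
          + (w * (1 - r)) • ((0 : ℝ), a1, H1up, (0 : ℝ)) := by
      simp only [Prod.smul_mk, Prod.mk_add_mk, smul_eq_mul, Prod.mk.injEq]
      refine ⟨by ring, ?_, ?_, by ring⟩
      · rw [hw, hr]; field_simp; ring
      · rw [hw, hr]; field_simp; ring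
    rw [key]
    exact combo3_mem (subset_convexHull ℝ _ (memA hH hF hx1 hx2))
      (subset_convexHull ℝ _ (memA hH hF (le_refl _) htlo.le))
      (subset_convexHull ℝ _ (memTop hH hF htlo))
      (by linarith) (by positivity) (by nlinarith) (by ring)

lemma hullB {a1 tlo F1 H1up : ℝ} (hH : 0 < H1up) (hF : 0 < F1) (htlo : tlo < a1)
    (htlo' : tlo ≤ a1 - F1 / H1up)
    {x w : ℝ} (hx1 : a1 - F1 / H1up ≤ x) (hx2 : x ≤ a1)
    (hw1 : H1up * (a1 - F1 / H1up) * (a1 - x) ≤ w) (hw2 : w ≤ H1up * x * (a1 - x)) :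
    (H1up * (a1 - x), x, H1up, w) ∈ convexHull ℝ (Sset a1 tlo F1 H1up) := by
  have hd : 0 < F1 / H1up := div_pos hF hH
  have hB1 : (H1up * (a1 - x), x, H1up, H1up * (a1 - x) * x) ∈ Sset a1 tlo F1 H1up :=
    memB hH hF htlo' hx1 hx2
  have hB2 : (H1up * (a1 - (a1 - F1 / H1up)), (a1 - F1 / H1up), H1up,
      H1up * (a1 - (a1 - F1 / H1up)) * (a1 - F1 / H1up)) ∈ Sset a1 tlo F1 H1up :=
    memB hH hF htlo' (le_refl _) (by linarith)
  have hTop : ((0 : ℝ), a1, H1up, (0 : ℝ)) ∈ Sset a1 tlo F1 H1up := memTop hH hF htlo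
  set q : ℝ := a1 - F1 / H1up with hqdef
  have haq : a1 - q = F1 / H1up := by rw [hqdef]; ring
  have haq0 : 0 < a1 - q := by rw [haq]; exact hd
  have hqF : F1 = H1up * (a1 - q) := by rw [haq]; field_simp
  rcases eq_or_lt_of_le hx2 with hx | hxa
  · subst hx
    have hw0 : w = 0 := le_antisymm (by nlinarith) (by nlinarith)
    rw [show H1up * (x - x) = (0 : ℝ) by ring, hw0]
    exact subset_convexHull ℝ _ hTop
  rcases eq_or_lt_of_le hx1 with hx | hxq
  · rw [hx] at hw1
    have hww : w = H1up * (a1 - x) * x := le_antisymm (by nlinarith) (by nlinarith)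
    rw [hww]
    exact subset_convexHull ℝ _ hB1
  · have hden : (0 : ℝ) < H1up * (a1 - x) * (x - q) := by
      apply mul_pos (mul_pos hH (by linarith)); linarith
    set s : ℝ := (w - H1up * q * (a1 - x)) / (H1up * (a1 - x) * (x - q)) with hs
    have hs0 : 0 ≤ s := by
      apply div_nonneg _ hden.le; nlinarith
    have hs1 : s ≤ 1 := by rw [hs, div_le_one hden]; nlinarith
    set r : ℝ := (a1 - x) / (a1 - q) with hr
    have hr0 : 0 ≤ r := by apply div_nonneg (by linarith) haq0.le
    have hr1 : r ≤ 1 := by rw [hr, div_le_one haq0]; linarith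
    have key : (H1up * (a1 - x), x, H1up, w) =
        s • (H1up * (a1 - x), x, H1up, H1up * (a1 - x) * x)
          + ((1 - s) * r) • (H1up * (a1 - q), q, H1up, H1up * (a1 - q) * q)
          + ((1 - s) * (1 - r)) • ((0 : ℝ), a1, H1up, (0 : ℝ)) := by
      simp only [Prod.smul_mk, Prod.mk_add_mk, smul_eq_mul, Prod.mk.injEq]
      refine ⟨?_, ?_, by ring, ?_⟩
      · rw [hs, hr]; field_simp; ring
      · rw [hs, hr]; field_simp; ring
      · rw [hs, hr]; field_simp; ring
    rw [key]
    exact combo3_mem (subset_convexHull ℝ _ hB1) (subset_convexHull ℝ _ hB2)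
      (subset_convexHull ℝ _ hTop)
      hs0 (mul_nonneg (by linarith) hr0) (mul_nonneg (by linarith) (by linarith)) (by ring)

lemma hullC {a1 tlo F1 H1up : ℝ} (hH : 0 < H1up) (hF : 0 < F1) (htlo : tlo < a1)
    (htlo' : tlo ≤ a1 - F1 / H1up)
    {x h : ℝ} (hx1 : tlo ≤ x) (hx2 : x ≤ a1 - F1 / H1up)
    (hh1 : F1 ≤ h * (a1 - x)) (hh2 : h * (a1 - tlo) ≤ F1 + H1up * (x - tlo)) :
    (F1, x, h, F1 * x) ∈ convexHull ℝ (Sset a1 tlo F1 H1up) := by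
  have hd : 0 < F1 / H1up := div_pos hF hH
  have hxa : x < a1 := by linarith
  have hax : (0 : ℝ) < a1 - x := by linarith
  have hB : (0 : ℝ) < a1 - tlo := by linarith
  rcases eq_or_lt_of_le hh1 with hcurve | hcurve
  · have hhe : h = F1 / (a1 - x) := by rw [eq_div_iff hax.ne']; linarith
    rw [hhe]
    exact subset_convexHull ℝ _ (memC hH hF hx1 hx2)
  set q : ℝ := a1 - F1 / H1up with hqdef
  have haq : a1 - q = F1 / H1up := by rw [hqdef]; ring
  have haq0 : 0 < a1 - q := by rw [haq]; exact hd
  have hqF : F1 = H1up * (a1 - q) := by rw [haq]; field_simp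
  -- strictly inside: tlo < x < q
  have hkey : 0 < H1up * (x - tlo) * (q - x) := by nlinarith
  have hxt : tlo < x := by
    rcases eq_or_lt_of_le hx1 with hh | hh
    · exfalso; rw [← hh] at hkey; nlinarith
    · exact hh
  have hxq : x < q := by
    rcases eq_or_lt_of_le hx2 with hh | hh
    · exfalso; rw [hh] at hkey; nlinarith
    · exact hh
  set s : ℝ := ((F1 + H1up * (x - tlo)) - h * (a1 - tlo)) * (a1 - x) /
      (H1up * (x - tlo) * (q - x)) with hs
  have hs0 : 0 ≤ s := by
    apply div_nonneg _ hkey.le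
    apply mul_nonneg (by linarith) hax.le
  have hs1 : s ≤ 1 := by
    rw [hs, div_le_one hkey, hqF]
    rw [hqF] at hh1
    nlinarith [mul_nonneg (by linarith : (0:ℝ) ≤ a1 - tlo) (sub_nonneg.2 hh1)]
  set r : ℝ := (q - x) / (q - tlo) with hr
  have hqt : (0 : ℝ) < q - tlo := by linarith
  have hr0 : 0 ≤ r := by apply div_nonneg (by linarith) hqt.le
  have hr1 : r ≤ 1 := by rw [hr, div_le_one hqt]; linarith
  have hne1 : x - tlo ≠ 0 := by linarith
  have hne2 : q - x ≠ 0 := by linarith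
  have hne3 : q - tlo ≠ 0 := by linarith
  have hne4 : a1 - tlo ≠ 0 := by linarith
  have hne5 : a1 - q ≠ 0 := by linarith
  have hne6 : H1up ≠ 0 := hH.ne'
  have key : (F1, x, h, F1 * x) =
      s • (F1, x, F1 / (a1 - x), F1 * x)
        + ((1 - s) * r) • (F1, tlo, F1 / (a1 - tlo), F1 * tlo)
        + ((1 - s) * (1 - r)) • (F1, q, F1 / (a1 - q), F1 * q) := by
    simp only [Prod.smul_mk, Prod.mk_add_mk, smul_eq_mul, Prod.mk.injEq]
    refine ⟨by ring, ?_, ?_, ?_⟩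
    · rw [hs, hr]; field_simp; ring
    · rw [hs, hr, hqF]; field_simp; ring
    · rw [hs, hr]; field_simp; ring
  rw [key]
  exact combo3_mem (subset_convexHull ℝ _ (memC hH hF hx1 hx2))
    (subset_convexHull ℝ _ (memC hH hF (le_refl _) htlo'))
    (subset_convexHull ℝ _ (memC hH hF (le_trans hx1 hxq.le) (le_refl _)))
    hs0 (mul_nonneg (by linarith) hr0) (mul_nonneg (by linarith) (by linarith)) (by ring)

def Pset (a1 tlo F1 H1up : ℝ) : Set (ℝ × ℝ × ℝ × ℝ) :=
  {p : ℝ × ℝ × ℝ × ℝ |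
    ∃ ta tb tc la lb lc : ℝ,
      H1up * lb + F1 * Tstar a1 lc tc ≤ p.2.2.1 ∧
      p.2.2.1 ≤ H1up * (ta - tlo * la) / (a1 - tlo) + H1up * lb +
        F1 * lc / (a1 - tlo) + H1up * (tc - tlo * lc) / (a1 - tlo) ∧
      H1up * (a1 - F1 / H1up) * (a1 * lb - tb) + F1 * tc ≤ p.2.2.2 ∧
      p.2.2.2 ≤ H1up * (a1 * tb - Qpersp lb tb) + F1 * tc ∧
      tlo * la ≤ ta ∧ ta ≤ a1 * la ∧
      (a1 - F1 / H1up) * lb ≤ tb ∧ tb ≤ a1 * lb ∧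
      tlo * lc ≤ tc ∧ tc ≤ (a1 - F1 / H1up) * lc ∧
      p.1 = H1up * (a1 * lb - tb) + F1 * lc ∧
      p.2.1 = ta + tb + tc ∧
      la + lb + lc = 1 ∧ 0 ≤ la ∧ 0 ≤ lb ∧ 0 ≤ lc}

lemma S_subset_P {a1 tlo F1 H1up : ℝ} (hH : 0 < H1up) (hF : 0 < F1) (htlo : tlo < a1)
    (htlo' : tlo ≤ a1 - F1 / H1up) :
    Sset a1 tlo F1 H1up ⊆ Pset a1 tlo F1 H1up := by
  rintro ⟨f, t, H, u⟩ ⟨h1, h2, h3, h4, h5, h6, h7⟩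
  simp only [Sset, Set.mem_setOf_eq] at h1 h2 h3 h4 h5 h6 h7
  simp only [Pset, Set.mem_setOf_eq]
  have hB : (0 : ℝ) < a1 - tlo := by linarith
  have hfH : 0 ≤ f / H1up := div_nonneg h1 hH.le
  by_cases hta : t = a1
  · -- θ = a1 : f = 0, use piece A alone with ta = a1
    have hf0 : f = 0 := by
      have h9 : f / H1up ≤ 0 := by rw [hta] at h4; linarith
      have h10 : f / H1up = 0 := le_antisymm h9 hfH
      field_simp at h10; simpa using h10
    obtain ⟨hH0, hH1⟩ := h7 hta
    refine ⟨a1, 0, 0, 1, 0, 0, ?_, ?_, ?_, ?_, ?_, ?_, ?_, ?_, ?_, ?_, ?_, ?_, ?_, ?_, ?_, ?_⟩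
    · simp [Tstar]; linarith
    · have : H1up * (a1 - tlo * 1) / (a1 - tlo) = H1up := by
        rw [mul_one, mul_div_assoc, div_self hB.ne', mul_one]
      simp only [this]; simp; linarith
    · have hu : u = 0 := by rw [h5, hf0]; ring
      rw [hu]; simp
    · have hu : u = 0 := by rw [h5, hf0]; ring
      rw [hu]; simp [Qpersp]
    · rw [mul_one]; exact htlo.le
    · rw [mul_one]
    · simp
    · simp
    · simp
    · simp
    · rw [hf0]; ring
    · rw [hta]; ring
    · ring
    · norm_num
    · norm_num
    · norm_num
  · have hta' : t < a1 := lt_of_le_of_ne (by linarith) hta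
    have hHeq : H = f / (a1 - t) := h6 hta'
    have hat : (0 : ℝ) < a1 - t := by linarith
    have hfle : f ≤ H1up * (a1 - t) := by
      have h9 : f / H1up ≤ a1 - t := by linarith
      rw [div_le_iff₀ hH] at h9; linarith
    by_cases hcase : t ≤ a1 - F1 / H1up
    · -- pieces A + C
      set lc : ℝ := f / F1 with hlc
      have hlc0 : 0 ≤ lc := div_nonneg h1 hF.le
      have hlc1 : lc ≤ 1 := (div_le_one hF).2 h2
      have hFlc : F1 * lc = f := by rw [hlc]; field_simp
      refine ⟨t * (1 - lc), 0, t * lc, 1 - lc, 0, lc, ?_, ?_, ?_, ?_, ?_, ?_, ?_, ?_, ?_, ?_,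
        ?_, ?_, ?_, ?_, ?_, ?_⟩
      · rcases eq_or_lt_of_le h1 with hf0 | hfpos
        · have hlc' : lc = 0 := by rw [hlc, ← hf0]; simp
          have hH0 : H = 0 := by rw [hHeq, ← hf0]; simp
          rw [hlc', hH0]; simp [Tstar]
        · have hlcpos : 0 < lc := by rw [hlc]; positivity
          have hT : Tstar a1 lc (t * lc) = lc / (a1 - t) := by
            unfold Tstar
            rw [if_pos hlcpos, show a1 * lc - t * lc = lc * (a1 - t) by ring, pow_two,
              mul_div_mul_left _ _ hlcpos.ne']
          rw [hT, hHeq]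
          rw [mul_zero, zero_add, mul_div_assoc', div_le_div_iff₀ hat hat]
          nlinarith [hFlc]
      · have hcollect : H1up * (t * (1 - lc) - tlo * (1 - lc)) / (a1 - tlo) + H1up * 0 +
            F1 * lc / (a1 - tlo) + H1up * (t * lc - tlo * lc) / (a1 - tlo) =
            (H1up * (t - tlo) + F1 * lc) / (a1 - tlo) := by
          field_simp; ring
        rw [hcollect, hHeq, div_le_div_iff₀ hat hB]
        nlinarith [mul_le_mul_of_nonneg_left hfle (by linarith : (0:ℝ) ≤ t - tlo), hFlc]
      · have he : H1up * (a1 - F1 / H1up) * (a1 * 0 - 0) + F1 * (t * lc) = u := by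
          rw [h5]; linear_combination t * hFlc
        linarith [he.le]
      · have he : H1up * (a1 * 0 - Qpersp 0 0) + F1 * (t * lc) = u := by
          rw [h5]; simp [Qpersp]; linear_combination t * hFlc
        linarith [he.ge]
      · exact mul_le_mul_of_nonneg_right h3 (by linarith)
      · exact mul_le_mul_of_nonneg_right hta'.le (by linarith)
      · simp
      · simp
      · exact mul_le_mul_of_nonneg_right h3 hlc0
      · exact mul_le_mul_of_nonneg_right hcase hlc0
      · linear_combination hFlc.symm
      · ring
      · ring
      · linarith
      · exact le_refl _
      · exact hlc0
    · -- pieces A + B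
      push_neg at hcase
      set lb : ℝ := H / H1up with hlb
      have hH0 : 0 ≤ H := by rw [hHeq]; positivity
      have hHle : H ≤ H1up := by rw [hHeq, div_le_iff₀ hat]; nlinarith
      have hlb0 : 0 ≤ lb := div_nonneg hH0 hH.le
      have hlb1 : lb ≤ 1 := (div_le_one hH).2 hHle
      have hHlb : H1up * lb = H := by rw [hlb]; field_simp
      have hflb : H1up * lb * (a1 - t) = f := by
        rw [hHlb, hHeq, div_mul_cancel₀ _ hat.ne']
      refine ⟨t * (1 - lb), t * lb, 0, 1 - lb, lb, 0, ?_, ?_, ?_, ?_, ?_, ?_, ?_, ?_, ?_, ?_,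
        ?_, ?_, ?_, ?_, ?_, ?_⟩
      · simp [Tstar]; linarith [hHlb]
      · have hterm : 0 ≤ H1up * (t * (1 - lb) - tlo * (1 - lb)) / (a1 - tlo) := by
          apply div_nonneg _ hB.le
          apply mul_nonneg hH.le; nlinarith
        have hz : H1up * ((0:ℝ) - tlo * 0) / (a1 - tlo) = 0 := by simp
        have hz2 : F1 * (0:ℝ) / (a1 - tlo) = 0 := by simp
        rw [hz, hz2]
        linarith [hHlb]
      · have he : H1up * (a1 - F1 / H1up) * (a1 * lb - t * lb) = (a1 - F1 / H1up) * f := by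
          linear_combination (a1 - F1 / H1up) * hflb
        rw [h5, he]
        nlinarith [mul_le_mul_of_nonneg_right hcase.le h1]
      · rcases eq_or_lt_of_le hlb0 with hlbz | hlbpos
        · have hf0 : f = 0 := by rw [← hflb, ← hlbz]; ring
          have hu : u = 0 := by rw [h5, hf0]; ring
          rw [hu, ← hlbz]; simp [Qpersp]
        · have hQ : Qpersp lb (t * lb) = t ^ 2 * lb := by
            unfold Qpersp; rw [if_pos hlbpos]; field_simp
          have he : H1up * (a1 * (t * lb) - Qpersp lb (t * lb)) + F1 * 0 = u := by
            rw [hQ, h5]; linear_combination t * hflb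
          linarith [he.ge]
      · exact mul_le_mul_of_nonneg_right h3 (by linarith)
      · exact mul_le_mul_of_nonneg_right hta'.le (by linarith)
      · exact mul_le_mul_of_nonneg_right hcase.le hlb0
      · exact mul_le_mul_of_nonneg_right hta'.le hlb0
      · simp
      · simp
      · linear_combination hflb.symm
      · ring
      · ring
      · linarith
      · exact hlb0
      · exact le_refl _

set_option maxHeartbeats 1000000 in
lemma P_convex {a1 tlo F1 H1up : ℝ} (hH : 0 < H1up) (hF : 0 < F1) (htlo : tlo < a1)
    (htlo' : tlo ≤ a1 - F1 / H1up) :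
    Convex ℝ (Pset a1 tlo F1 H1up) := by
  have hd : 0 < F1 / H1up := div_pos hF hH
  rintro ⟨f, t, H, u⟩ ⟨ta, tb, tc, la, lb, lc, c1, c2, c3, c4, c5, c6, c7, c8, c9, c10,
    c11, c12, c13, c14, c15, c16⟩
    ⟨f', t', H', u'⟩ ⟨ta', tb', tc', la', lb', lc', d1, d2, d3, d4, d5, d6, d7, d8, d9, d10,
    d11, d12, d13, d14, d15, d16⟩ μ ν hμ hν hμν
  dsimp only at c1 c2 c3 c4 c11 c12 d1 d2 d3 d4 d11 d12
  simp only [Pset, Set.mem_setOf_eq, Prod.smul_mk, Prod.mk_add_mk, smul_eq_mul]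
  refine ⟨μ * ta + ν * ta', μ * tb + ν * tb', μ * tc + ν * tc', μ * la + ν * la',
    μ * lb + ν * lb', μ * lc + ν * lc', ?_, ?_, ?_, ?_, ?_, ?_, ?_, ?_, ?_, ?_, ?_, ?_,
    ?_, ?_, ?_, ?_⟩
  · -- H lower bound, uses Tstar convexity
    have T1 : Tstar a1 (μ * lc + ν * lc') (μ * tc + ν * tc') ≤
        μ * Tstar a1 lc tc + ν * Tstar a1 lc' tc' := by
      have h1 := Tstar_add a1 (μ * lc) (μ * tc) (ν * lc') (ν * tc')
        (mul_nonneg hμ c16) (mul_nonneg hν d16)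
        (fun h => by
          have hμ2 : 0 < μ := hμ.lt_of_ne (fun hh => by rw [← hh, zero_mul] at h; exact absurd h (lt_irrefl 0))
          have hl2 : 0 < lc := c16.lt_of_ne (fun hh => by rw [← hh, mul_zero] at h; exact absurd h (lt_irrefl 0))
          have h9 : tc < a1 * lc := by nlinarith [c10, mul_pos hl2 hd]
          have := mul_lt_mul_of_pos_left h9 hμ2
          linarith)
        (fun h => by
          rcases mul_eq_zero.mp h with h | h
          · rw [h]; ring
          · have : tc = 0 := by rw [h] at c9 c10; simp at c9 c10; linarith
            rw [this]; ring)
        (fun h => by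
          have hν2 : 0 < ν := hν.lt_of_ne (fun hh => by rw [← hh, zero_mul] at h; exact absurd h (lt_irrefl 0))
          have hl2 : 0 < lc' := d16.lt_of_ne (fun hh => by rw [← hh, mul_zero] at h; exact absurd h (lt_irrefl 0))
          have h9 : tc' < a1 * lc' := by nlinarith [d10, mul_pos hl2 hd]
          have := mul_lt_mul_of_pos_left h9 hν2
          linarith)
        (fun h => by
          rcases mul_eq_zero.mp h with h | h
          · rw [h]; ring
          · have : tc' = 0 := by rw [h] at d9 d10; simp at d9 d10; linarith
            rw [this]; ring)
      rw [Tstar_smul a1 hμ, Tstar_smul a1 hν] at h1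
      exact h1
    have k1 := mul_le_mul_of_nonneg_left c1 hμ
    have k1' := mul_le_mul_of_nonneg_left d1 hν
    have k2 := mul_le_mul_of_nonneg_left T1 hF.le
    linarith [k1, k1', k2]
  · have k1 := mul_le_mul_of_nonneg_left c2 hμ
    have k1' := mul_le_mul_of_nonneg_left d2 hν
    have expand : ∀ A B C D : ℝ, H1up * A / (a1 - tlo) + H1up * B + F1 * C / (a1 - tlo)
        + H1up * D / (a1 - tlo) = (H1up * A + F1 * C + H1up * D) * (a1 - tlo)⁻¹ + H1up * B := by
      intros; field_simp; ring
    rw [expand] at k1 k1' ⊢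
    nlinarith [k1, k1']
  · have k1 := mul_le_mul_of_nonneg_left c3 hμ
    have k1' := mul_le_mul_of_nonneg_left d3 hν
    linarith [k1, k1']
  · -- u upper bound, uses Qpersp convexity
    have Q1 : Qpersp (μ * lb + ν * lb') (μ * tb + ν * tb') ≤
        μ * Qpersp lb tb + ν * Qpersp lb' tb' := by
      have h1 := Qpersp_add (μ * lb) (μ * tb) (ν * lb') (ν * tb')
        (mul_nonneg hμ c15) (mul_nonneg hν d15)
        (fun h => by
          rcases mul_eq_zero.mp h with h | h
          · rw [h]; ring
          · have : tb = 0 := by rw [h] at c7 c8; simp at c7 c8; linarith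
            rw [this]; ring)
        (fun h => by
          rcases mul_eq_zero.mp h with h | h
          · rw [h]; ring
          · have : tb' = 0 := by rw [h] at d7 d8; simp at d7 d8; linarith
            rw [this]; ring)
      rw [Qpersp_smul hμ, Qpersp_smul hν] at h1
      exact h1
    have k1 := mul_le_mul_of_nonneg_left c4 hμ
    have k1' := mul_le_mul_of_nonneg_left d4 hν
    have k2 := mul_le_mul_of_nonneg_left Q1 hH.le
    linarith [k1, k1', k2]
  · linarith [mul_le_mul_of_nonneg_left c5 hμ, mul_le_mul_of_nonneg_left d5 hν]
  · linarith [mul_le_mul_of_nonneg_left c6 hμ, mul_le_mul_of_nonneg_left d6 hν]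
  · linarith [mul_le_mul_of_nonneg_left c7 hμ, mul_le_mul_of_nonneg_left d7 hν]
  · linarith [mul_le_mul_of_nonneg_left c8 hμ, mul_le_mul_of_nonneg_left d8 hν]
  · linarith [mul_le_mul_of_nonneg_left c9 hμ, mul_le_mul_of_nonneg_left d9 hν]
  · linarith [mul_le_mul_of_nonneg_left c10 hμ, mul_le_mul_of_nonneg_left d10 hν]
  · linear_combination μ * c11 + ν * d11
  · linear_combination μ * c12 + ν * d12
  · linear_combination μ * c13 + ν * d13 + hμν
  · linarith [mul_nonneg hμ c14, mul_nonneg hν d14]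
  · linarith [mul_nonneg hμ c15, mul_nonneg hν d15]
  · linarith [mul_nonneg hμ c16, mul_nonneg hν d16]

set_option maxHeartbeats 1000000 in
lemma P_subset_hull {a1 tlo F1 H1up : ℝ} (hH : 0 < H1up) (hF : 0 < F1) (htlo : tlo < a1)
    (htlo' : tlo ≤ a1 - F1 / H1up) :
    Pset a1 tlo F1 H1up ⊆ convexHull ℝ (Sset a1 tlo F1 H1up) := by
  have hB : (0 : ℝ) < a1 - tlo := by linarith
  have hd : 0 < F1 / H1up := div_pos hF hH
  have hqF : H1up * (a1 - F1 / H1up) = H1up * a1 - F1 := by field_simp <;> ring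
  rintro ⟨f, t, H, u⟩ ⟨ta, tb, tc, la, lb, lc, c1, c2, c3, c4, c5, c6, c7, c8, c9, c10,
    c11, c12, c13, c14, c15, c16⟩
  dsimp only at c1 c2 c3 c4 c11 c12
  -- zero propagation
  have hza : la = 0 → ta = 0 := fun h => by rw [h] at c5 c6; simp at c5 c6; linarith
  have hzb : lb = 0 → tb = 0 := fun h => by rw [h] at c7 c8; simp at c7 c8; linarith
  have hzc : lc = 0 → tc = 0 := fun h => by rw [h] at c9 c10; simp at c9 c10; linarith
  -- abbreviations
  set Clo : ℝ := F1 * Tstar a1 lc tc with hCloDef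
  set Cup : ℝ := F1 * lc / (a1 - tlo) + H1up * (tc - tlo * lc) / (a1 - tlo) with hCupDef
  set Aup : ℝ := H1up * (ta - tlo * la) / (a1 - tlo) with hAupDef
  set D : ℝ := H - H1up * lb with hDDef
  have hCloD : Clo ≤ D := by rw [hDDef]; linarith
  have hDle : D ≤ Aup + Cup := by rw [hDDef, hAupDef, hCupDef]; linarith
  have hAup0 : 0 ≤ Aup := by
    rw [hAupDef]; apply div_nonneg _ hB.le; nlinarith [c5]
  have hspos : 0 < lc → 0 < a1 * lc - tc := by
    intro hlc; nlinarith [c10, mul_pos hd hlc]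
  have hCloCup : Clo ≤ Cup := by
    rcases eq_or_lt_of_le c16 with h | hlc
    · have htc0 : tc = 0 := hzc h.symm
      rw [hCloDef, hCupDef, ← h, htc0]
      simp [Tstar]
    · have hs := hspos hlc
      have hT : Tstar a1 lc tc = lc ^ 2 / (a1 * lc - tc) := if_pos hlc
      rw [hCloDef, hCupDef, hT, ← add_div, mul_div_assoc', div_le_div_iff₀ hs hB]
      have h62 : 0 ≤ H1up * (a1 * lc - tc) - F1 * lc := by
        nlinarith [mul_le_mul_of_nonneg_left c10 hH.le, hqF]
      nlinarith [mul_nonneg (by linarith [c9] : (0:ℝ) ≤ tc - tlo * lc) h62]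
  set Hc : ℝ := min Cup D with hHcDef
  set Ha : ℝ := D - Hc with hHaDef
  have hHcClo : Clo ≤ Hc := le_min hCloCup hCloD
  have hHcCup : Hc ≤ Cup := min_le_left _ _
  have hHa0 : 0 ≤ Ha := by rw [hHaDef]; linarith [min_le_right Cup D]
  have hHaAup : Ha ≤ Aup := by
    rcases le_total Cup D with h | h
    · rw [hHaDef, hHcDef, min_eq_left h]; linarith
    · rw [hHaDef, hHcDef, min_eq_right h]; linarith
  set ub : ℝ := u - F1 * tc with hubDef
  have hub1 : H1up * (a1 - F1 / H1up) * (a1 * lb - tb) ≤ ub := by rw [hubDef]; linarith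
  have hub2 : ub ≤ H1up * (a1 * tb - Qpersp lb tb) := by rw [hubDef]; linarith
  -- the three points
  set PA : ℝ × ℝ × ℝ × ℝ := if la = 0 then ((0:ℝ), tlo, (0:ℝ), (0:ℝ))
    else ((0:ℝ), ta / la, Ha / la, (0:ℝ)) with hPADef
  set PB : ℝ × ℝ × ℝ × ℝ := if lb = 0 then ((0:ℝ), tlo, (0:ℝ), (0:ℝ))
    else (H1up * (a1 - tb / lb), tb / lb, H1up, ub / lb) with hPBDef
  set PC : ℝ × ℝ × ℝ × ℝ := if lc = 0 then ((0:ℝ), tlo, (0:ℝ), (0:ℝ))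
    else (F1, tc / lc, Hc / lc, F1 * (tc / lc)) with hPCDef
  have hdefault : ((0:ℝ), tlo, (0:ℝ), (0:ℝ)) ∈ Sset a1 tlo F1 H1up :=
    memA hH hF (le_refl _) htlo.le
  -- memberships
  have hPA : PA ∈ convexHull ℝ (Sset a1 tlo F1 H1up) := by
    rw [hPADef]
    by_cases h : la = 0
    · rw [if_pos h]; exact subset_convexHull ℝ _ hdefault
    · rw [if_neg h]
      have hla : 0 < la := c14.lt_of_ne (Ne.symm h)
      have hx1 : tlo ≤ ta / la := (le_div_iff₀ hla).2 (by linarith [c5])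
      have hx2 : ta / la ≤ a1 := (div_le_iff₀ hla).2 (by linarith [c6])
      have hkey : Ha * (a1 - tlo) ≤ H1up * (ta - tlo * la) := by
        have := (le_div_iff₀ hB).mp (hHaAup.trans_eq hAupDef)
        linarith [this]
      refine hullA hH hF htlo hx1 hx2 (div_nonneg hHa0 c14) ?_
      have e3 : (ta / la - tlo) * la = ta - tlo * la := by
        rw [sub_mul, div_mul_cancel₀ _ hla.ne']
      rw [div_mul_eq_mul_div, div_le_iff₀ hla, mul_assoc, e3]
      exact hkey
  have hPB : PB ∈ convexHull ℝ (Sset a1 tlo F1 H1up) := by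
    rw [hPBDef]
    by_cases h : lb = 0
    · rw [if_pos h]; exact subset_convexHull ℝ _ hdefault
    · rw [if_neg h]
      have hlb : 0 < lb := c15.lt_of_ne (Ne.symm h)
      have hx1 : a1 - F1 / H1up ≤ tb / lb := (le_div_iff₀ hlb).2 (by linarith [c7])
      have hx2 : tb / lb ≤ a1 := (div_le_iff₀ hlb).2 (by linarith [c8])
      have hQ : Qpersp lb tb = tb ^ 2 / lb := if_pos hlb
      refine hullB hH hF htlo htlo' hx1 hx2 ?_ ?_
      · have e3 : (a1 - tb / lb) * lb = a1 * lb - tb := by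
          rw [sub_mul, div_mul_cancel₀ _ hlb.ne']
        rw [le_div_iff₀ hlb, mul_assoc, e3]
        exact hub1
      · have e3 : H1up * (tb / lb) * (a1 - tb / lb) * lb = H1up * (a1 * tb - tb ^ 2 / lb) := by
          field_simp
        rw [div_le_iff₀ hlb, e3]
        rw [hQ] at hub2
        exact hub2
  have hPC : PC ∈ convexHull ℝ (Sset a1 tlo F1 H1up) := by
    rw [hPCDef]
    by_cases h : lc = 0
    · rw [if_pos h]; exact subset_convexHull ℝ _ hdefault
    · rw [if_neg h]
      have hlc : 0 < lc := c16.lt_of_ne (Ne.symm h)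
      have hs := hspos hlc
      have hx1 : tlo ≤ tc / lc := (le_div_iff₀ hlc).2 (by linarith [c9])
      have hx2 : tc / lc ≤ a1 - F1 / H1up := (div_le_iff₀ hlc).2 (by linarith [c10])
      have hT : Tstar a1 lc tc = lc ^ 2 / (a1 * lc - tc) := if_pos hlc
      have hCloVal : F1 * lc ^ 2 / (a1 * lc - tc) ≤ Hc := by
        rw [hCloDef, hT, mul_div_assoc'] at hHcClo; exact hHcClo
      have hh1 : F1 ≤ Hc / lc * (a1 - tc / lc) := by
        have key := (div_le_iff₀ hs).mp hCloVal
        have key2 : a1 - tc / lc = (a1 * lc - tc) / lc := by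
          rw [eq_div_iff hlc.ne', sub_mul, div_mul_cancel₀ _ hlc.ne']
        rw [div_mul_eq_mul_div, le_div_iff₀ hlc, key2, ← mul_div_assoc, le_div_iff₀ hlc]
        nlinarith [key]
      have hh2 : Hc / lc * (a1 - tlo) ≤ F1 + H1up * (tc / lc - tlo) := by
        have hCupVal : Hc * (a1 - tlo) ≤ F1 * lc + H1up * (tc - tlo * lc) := by
          have := hHcCup.trans_eq hCupDef
          rw [← add_div] at this
          linarith [(le_div_iff₀ hB).mp this]
        have e3 : (F1 + H1up * (tc / lc - tlo)) * lc = F1 * lc + H1up * (tc - tlo * lc) := by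
          rw [add_mul, mul_assoc, sub_mul, div_mul_cancel₀ _ hlc.ne']
          try ring
        rw [div_mul_eq_mul_div, div_le_iff₀ hlc, e3]
        exact hCupVal
      exact hullC hH hF htlo htlo' hx1 hx2 hh1 hh2
  -- the decomposition identity
  have hPAeq : la • PA = ((0:ℝ), ta, Ha, (0:ℝ)) := by
    rw [hPADef]
    by_cases h : la = 0
    · have hHa : Ha = 0 := by
        have : Aup = 0 := by rw [hAupDef, hza h, h]; simp
        linarith [hHaAup, hHa0]
      rw [if_pos h, h, hza h, hHa]; simp; rfl
    · rw [if_neg h]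
      simp only [Prod.smul_mk, smul_eq_mul, Prod.mk.injEq]
      refine ⟨by ring, by field_simp, by field_simp, by ring⟩
  have hPBeq : lb • PB = (H1up * (a1 * lb - tb), tb, H1up * lb, ub) := by
    rw [hPBDef]
    by_cases h : lb = 0
    · have hub : ub = 0 := by
        have e1 : H1up * (a1 - F1 / H1up) * (a1 * lb - tb) = 0 := by rw [h, hzb h]; ring
        have e2 : H1up * (a1 * tb - Qpersp lb tb) = 0 := by
          rw [h, hzb h]; simp [Qpersp]
        linarith [hub1, hub2, e1.symm.le, e2.le]
      rw [if_pos h, h, hzb h, hub]; simp; rfl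
    · rw [if_neg h]
      simp only [Prod.smul_mk, smul_eq_mul, Prod.mk.injEq]
      refine ⟨by field_simp <;> ring, by field_simp, by ring, by field_simp⟩
  have hPCeq : lc • PC = (F1 * lc, tc, Hc, F1 * tc) := by
    rw [hPCDef]
    by_cases h : lc = 0
    · have hHc : Hc = 0 := by
        have hCup0 : Cup = 0 := by rw [hCupDef, h, hzc h]; simp
        have hClo0 : Clo = 0 := by rw [hCloDef, h, hzc h]; simp [Tstar]
        have := hHcCup
        rw [hCup0] at this
        linarith [hHcClo, hClo0.symm.le]
      rw [if_pos h, h, hzc h, hHc]; simp; rfl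
    · rw [if_neg h]
      simp only [Prod.smul_mk, smul_eq_mul, Prod.mk.injEq]
      refine ⟨?_, ?_, ?_, ?_⟩
      · ring
      · field_simp
      · field_simp
      · field_simp
  have hmain : ((f, t, H, u) : ℝ × ℝ × ℝ × ℝ) = la • PA + lb • PB + lc • PC := by
    rw [hPAeq, hPBeq, hPCeq]
    simp only [Prod.mk_add_mk, Prod.mk.injEq]
    refine ⟨by rw [c11]; ring, by rw [c12], ?_, by rw [hubDef]; ring⟩
    rw [hHaDef, hDDef]; ring
  rw [hmain]
  exact combo3_mem hPA hPB hPC c14 c15 c16 c13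

/-- Proposition 12 of the paper: the convex hull of the Underwood-fraction set `H₁`
(in coordinates `p = (f, θ, H, u)`, where `u = f·θ`, `H = f/(α1 − θ)` for `θ < α1`
and `0 ≤ H ≤ H1up` at `θ = α1`, with `θ ≤ α1 − f/H1up`) equals the projection of the
lifted disjunctive system with multipliers `(λᵃ, λᵇ, λᶜ)`. -/
theorem stmt15 (a1 tlo F1 H1up : ℝ)
    (hH : 0 < H1up) (hF : 0 < F1) (htlo : tlo < a1) (htlo' : tlo ≤ a1 - F1 / H1up) :
    convexHull ℝ
      {p : ℝ × ℝ × ℝ × ℝ |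
        0 ≤ p.1 ∧ p.1 ≤ F1 ∧ tlo ≤ p.2.1 ∧ p.2.1 ≤ a1 - p.1 / H1up ∧
        p.2.2.2 = p.1 * p.2.1 ∧
        (p.2.1 < a1 → p.2.2.1 = p.1 / (a1 - p.2.1)) ∧
        (p.2.1 = a1 → 0 ≤ p.2.2.1 ∧ p.2.2.1 ≤ H1up)} =
    {p : ℝ × ℝ × ℝ × ℝ |
      ∃ ta tb tc la lb lc : ℝ,
        H1up * lb + F1 * Tstar a1 lc tc ≤ p.2.2.1 ∧
        p.2.2.1 ≤ H1up * (ta - tlo * la) / (a1 - tlo) + H1up * lb +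
          F1 * lc / (a1 - tlo) + H1up * (tc - tlo * lc) / (a1 - tlo) ∧
        H1up * (a1 - F1 / H1up) * (a1 * lb - tb) + F1 * tc ≤ p.2.2.2 ∧
        p.2.2.2 ≤ H1up * (a1 * tb - Qpersp lb tb) + F1 * tc ∧
        tlo * la ≤ ta ∧ ta ≤ a1 * la ∧
        (a1 - F1 / H1up) * lb ≤ tb ∧ tb ≤ a1 * lb ∧
        tlo * lc ≤ tc ∧ tc ≤ (a1 - F1 / H1up) * lc ∧
        p.1 = H1up * (a1 * lb - tb) + F1 * lc ∧
        p.2.1 = ta + tb + tc ∧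
        la + lb + lc = 1 ∧ 0 ≤ la ∧ 0 ≤ lb ∧ 0 ≤ lc} := by
  apply Set.Subset.antisymm
  · exact convexHull_min (S_subset_P hH hF htlo htlo') (P_convex hH hF htlo htlo')
  · exact P_subset_hull hH hF htlo htlo'
end

section
/- Let α1, θ^lo, F1, H1^up be reals with H1^up > 0, F1 ≥ 0 and θ^lo < α1. Define H₁ = {(f, θ, H, u) ∈ ℝ^4 : 0 ≤ f ≤ F1, θ^lo ≤ θ ≤ α1 − f/H1^up, u = f·θ, and H = f/(α1 − θ) if θ < α1 while 0 ≤ H ≤ H1^up if θ = α1}. Then every (f, θ, H, u) ∈ H₁ satisfies: (a) for every θ̄ ∈ [θ^lo, α1): H ≥ f/(α1 − θ̄) + (u − θ̄·f)/(α1 − θ̄)^2; (b) H ≤ f/(α1 − θ^lo) + H1^up·(θ − θ^lo)/(α1 − θ^lo); and (c) max{θ^lo·f, F1·θ + α1·f − α1·F1} ≤ u ≤ min{α1·f, F1·θ + θ^lo·f − θ^lo·F1}. -/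
/-- Validity of the relaxation (eq:relax-hull-of-H1) of the paper: every point
`(f, θ, H, u)` of the Underwood-fraction set `H₁` satisfies the tangent cuts (a), the
secant cut (b), and the McCormick bounds (c) for `u = f·θ` over `[0, F1] × [θlo, α1]`. -/
theorem stmt16 (a1 tlo F1 H1up : ℝ)
    (hH : 0 < H1up) (hF : 0 ≤ F1) (htlo : tlo < a1)
    (f t H u : ℝ)
    (hf0 : 0 ≤ f) (hfF : f ≤ F1) (ht1 : tlo ≤ t) (ht2 : t ≤ a1 - f / H1up)
    (hu : u = f * t)
    (hHlt : t < a1 → H = f / (a1 - t))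
    (hHeq : t = a1 → 0 ≤ H ∧ H ≤ H1up) :
    (∀ tb, tlo ≤ tb → tb < a1 →
      f / (a1 - tb) + (u - tb * f) / (a1 - tb) ^ 2 ≤ H) ∧
    H ≤ f / (a1 - tlo) + H1up * (t - tlo) / (a1 - tlo) ∧
    max (tlo * f) (F1 * t + a1 * f - a1 * F1) ≤ u ∧
    u ≤ min (a1 * f) (F1 * t + tlo * f - tlo * F1) := by
  have hfH : 0 ≤ f / H1up := div_nonneg hf0 hH.le
  have hta1 : t ≤ a1 := le_trans ht2 (by linarith)
  have hlo : 0 < a1 - tlo := by linarith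
  have hfkey : f ≤ H1up * (a1 - t) := by
    have := (div_le_iff₀ hH).mp (by linarith : f / H1up ≤ a1 - t)
    linarith [this]
  refine ⟨?_, ?_, ?_, ?_⟩
  · intro tb htb1 htb2
    have hdb : 0 < a1 - tb := by linarith
    rcases lt_or_eq_of_le hta1 with h | h
    · have hd : 0 < a1 - t := by linarith
      rw [hHlt h, hu, div_add_div _ _ hdb.ne' (pow_ne_zero 2 hdb.ne'),
        div_le_div_iff₀ (by positivity) hd]
      nlinarith [sq_nonneg (t - tb), mul_nonneg hf0 (sq_nonneg (t - tb)), sq_nonneg (a1 - tb)]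
    · have hf : f = 0 := by
        have : f / H1up ≤ 0 := by linarith
        have : f ≤ 0 := by
          by_contra hc
          exact absurd (div_pos (lt_of_not_ge hc) hH) (not_lt.mpr this)
        linarith
      have hH0 := (hHeq h).1
      rw [hu, hf]
      simp
      positivity
  · rcases lt_or_eq_of_le hta1 with h | h
    · have hd : 0 < a1 - t := by linarith
      rw [hHlt h, ← add_div, div_le_div_iff₀ hd hlo]
      nlinarith [mul_nonneg (sub_nonneg.mpr ht1) (sub_nonneg.mpr hfkey)]
    · have hH' := (hHeq h).2
      have hf : f = 0 := by nlinarith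
      rw [hf, h, zero_div, zero_add, mul_div_assoc, div_self hlo.ne', mul_one]
      exact hH'
  · rw [max_le_iff]
    constructor
    · nlinarith [mul_nonneg hf0 (sub_nonneg.mpr ht1)]
    · nlinarith [mul_nonneg (sub_nonneg.mpr hfF) (sub_nonneg.mpr hta1)]
  · rw [le_min_iff]
    constructor
    · nlinarith [mul_nonneg hf0 (sub_nonneg.mpr hta1)]
    · nlinarith [mul_nonneg (sub_nonneg.mpr hfF) (sub_nonneg.mpr ht1)]
end

section
/- Let k < j − 1 be integers (so k + 1 < j) and let ζ_n ∈ ℝ for k ≤ n ≤ j. Suppose real numbers ν_{k,j}, ν_{k+1,j}, ν_{k,j-1}, ν_{k+1,j-1}, ν_{k,k}, ν_{j,j} satisfy: ν_{k,k} = 1 − ζ_k; ν_{j,j} = 1 − ζ_j; ν_{k,j} ≥ ν_{k,j-1} + ν_{k+1,j} − ν_{k+1,j-1}; ν_{k,j} ≤ ν_{k+1,j}; ν_{k,j} ≤ ν_{k,j-1}; ν_{k,j-1} ≥ ν_{k+1,j-1} + ν_{k,k} − 1; ν_{k+1,j} ≥ ν_{k+1,j-1} + ν_{j,j} − 1; ν_{k+1,j-1}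 ≥ 1 − Σ_{n=k+1}^{j-1} ζ_n; ν_{k,j} ≥ 0; ν_{k,j-1} ≥ 0; ν_{k,j-1} ≤ 1 − ζ_k; ν_{k+1,j} ≤ 1 − ζ_j; and ν_{k+1,j-1} ≤ 1 − ζ_n for every k + 1 ≤ n ≤ j − 1. Define τ = ν_{k+1,j-1} − ν_{k,j-1} − ν_{k+1,j} + ν_{k,j}. Then: τ ≥ 0; τ ≥ ζ_k − Σ_{n=k+1}^{j-1} ζ_n + ζ_j − 1; τ ≤ ζ_k; τ ≤ 1 − ζ_n for every k + 1 ≤ n ≤ j − 1; and τ ≤ ζ_j. -/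
/-- Remark 3 of the paper: the McCormick-type inequalities (eq:mccor) on the
linearization variables `ν` imply the convex-hull inequalities over the unit box for
the linearization `τ = ν_{k+1,j-1} − ν_{k,j-1} − ν_{k+1,j} + ν_{k,j}` of the monomial
`ζ_k·(1 − ζ_{k+1})⋯(1 − ζ_{j-1})·ζ_j` (case `k + 1 < j`). -/
theorem stmt17 (k j : ℕ) (hkj : k + 1 < j) (ζ : ℕ → ℝ)
    (νkj νk1j νkj1 νk1j1 νkk νjj : ℝ)
    (h1 : νkk = 1 - ζ k) (h2 : νjj = 1 - ζ j)
    (h3 : νkj1 + νk1j - νk1j1 ≤ νkj)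
    (h4 : νkj ≤ νk1j) (h5 : νkj ≤ νkj1)
    (h6 : νk1j1 + νkk - 1 ≤ νkj1)
    (h7 : νk1j1 + νjj - 1 ≤ νk1j)
    (h8 : 1 - ∑ m ∈ Finset.Ioo k j, ζ m ≤ νk1j1)
    (h9 : 0 ≤ νkj) (h10 : 0 ≤ νkj1)
    (h11 : νkj1 ≤ 1 - ζ k) (h12 : νk1j ≤ 1 - ζ j)
    (h13 : ∀ m, k + 1 ≤ m → m ≤ j - 1 → νk1j1 ≤ 1 - ζ m) :
    0 ≤ νk1j1 - νkj1 - νk1j + νkj ∧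
    ζ k - (∑ m ∈ Finset.Ioo k j, ζ m) + ζ j - 1 ≤ νk1j1 - νkj1 - νk1j + νkj ∧
    νk1j1 - νkj1 - νk1j + νkj ≤ ζ k ∧
    (∀ m, k + 1 ≤ m → m ≤ j - 1 → νk1j1 - νkj1 - νk1j + νkj ≤ 1 - ζ m) ∧
    νk1j1 - νkj1 - νk1j + νkj ≤ ζ j := by
  exact ⟨by linarith, by linarith, by linarith,
    fun m hm1 hm2 => by have := h13 m hm1 hm2; linarith, by linarith⟩
end

section
/- Let θ^lo, α1, F1, H1^up be reals with F1 > 0, H1^up > 0 and θ^lo ≤ α1 − F1/H1^up. Define S = {(f, θ, H, u) ∈ ℝ^4 : f = F1, θ^lo ≤ θ ≤ α1 − F1/H1^up, H = F1/(α1 − θ), u = F1·θ}. Then the convex hull of S equals {(f, θ, H, u) ∈ ℝ^4 : f = F1, u = F1·θ, θ^lo ≤ θ ≤ α1 − F1/H1^up, F1/(α1 − θ) ≤ H ≤ F1/(α1 − θ^lo) + H1^up·(θ − θ^lo)/(α1 − θ^lo)}. -/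
/-- Coefficients for writing a point of an interval as a convex combination of endpoints. -/
lemma stmt19_seg_coeff {x z y : ℝ} (hxz : x ≤ z) (hzy : z ≤ y) :
    ∃ a b : ℝ, 0 ≤ a ∧ 0 ≤ b ∧ a + b = 1 ∧ a * x + b * y = z := by
  rcases eq_or_lt_of_le (hxz.trans hzy) with h | h
  · exact ⟨1, 0, zero_le_one, le_refl 0, by ring, by nlinarith⟩
  · refine ⟨(y - z) / (y - x), (z - x) / (y - x), ?_, ?_, ?_, ?_⟩
    · exact div_nonneg (by linarith) (by linarith)
    · exact div_nonneg (by linarith) (by linarith)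
    · rw [← add_div, show y - z + (z - x) = y - x by ring,
        div_self (by linarith : y - x ≠ 0)]
    · rw [div_mul_eq_mul_div, div_mul_eq_mul_div, ← add_div,
        div_eq_iff (by linarith : y - x ≠ 0)]
      ring

/-- The convex hull of the slice `S^c` of the Underwood-fraction set with the component
flow fixed at `F1` (coordinates `p = (f, θ, H, u)`): the hull lies between the convex
function `θ ↦ F1/(α1 − θ)` and its secant over `[θlo, α1 − F1/H1up]`. -/
theorem stmt19 (tlo a1 F1 H1up : ℝ)
    (hF1 : 0 < F1) (hH : 0 < H1up) (htlo : tlo ≤ a1 - F1 / H1up) :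
    convexHull ℝ
      {p : ℝ × ℝ × ℝ × ℝ |
        p.1 = F1 ∧ tlo ≤ p.2.1 ∧ p.2.1 ≤ a1 - F1 / H1up ∧
        p.2.2.1 = F1 / (a1 - p.2.1) ∧ p.2.2.2 = F1 * p.2.1} =
    {p : ℝ × ℝ × ℝ × ℝ |
      p.1 = F1 ∧ p.2.2.2 = F1 * p.2.1 ∧ tlo ≤ p.2.1 ∧ p.2.1 ≤ a1 - F1 / H1up ∧
      F1 / (a1 - p.2.1) ≤ p.2.2.1 ∧
      p.2.2.1 ≤ F1 / (a1 - tlo) + H1up * (p.2.1 - tlo) / (a1 - tlo)} := by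
  have hFH : 0 < F1 / H1up := div_pos hF1 hH
  have hA : 0 < a1 - tlo := by linarith
  -- positivity of a1 - θ on the interval
  have hpos : ∀ t : ℝ, t ≤ a1 - F1 / H1up → 0 < a1 - t := fun t ht => by linarith
  -- curve lies below secant on the interval
  have hsec : ∀ t : ℝ, tlo ≤ t → t ≤ a1 - F1 / H1up →
      F1 / (a1 - t) ≤ F1 / (a1 - tlo) + H1up * (t - tlo) / (a1 - tlo) := by
    intro t ht1 ht2
    have hx : 0 < a1 - t := hpos t ht2
    have hxF : F1 ≤ H1up * (a1 - t) := by
      have := (div_le_iff₀ hH).mp (by linarith : F1 / H1up ≤ a1 - t)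
      linarith
    rw [div_add_div _ _ (ne_of_gt hA) (ne_of_gt hA), div_le_div_iff₀ hx (by positivity)]
    nlinarith [mul_nonneg (sub_nonneg.2 ht1) (sub_nonneg.2 hxF)]
  apply Set.Subset.antisymm
  · -- hull ⊆ RHS : RHS is convex and contains S
    apply convexHull_min
    · rintro ⟨f, t, Hv, u⟩ ⟨h1, h2, h3, h4, h5⟩
      exact ⟨h1, h5, h2, h3, le_of_eq h4.symm, h4 ▸ hsec t h2 h3⟩
    · rintro ⟨f1, t1, H1, u1⟩ ⟨e1, e2, e3, e4, e5, e6⟩ ⟨f2, t2, H2, u2⟩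
        ⟨g1, g2, g3, g4, g5, g6⟩ a b ha hb hab
      dsimp only at e1 e2 e3 e4 e5 e6 g1 g2 g3 g4 g5 g6
      simp only [Prod.smul_mk, Prod.mk_add_mk, smul_eq_mul, Set.mem_setOf_eq]
      have hx : 0 < a1 - t1 := hpos t1 e4
      have hy : 0 < a1 - t2 := hpos t2 g4
      refine ⟨by rw [e1, g1]; linear_combination F1 * hab,
        by rw [e2, g2]; ring,
        ?_, ?_,
        ?_, ?_⟩
      · have h1' := mul_le_mul_of_nonneg_left e3 ha
        have h2' := mul_le_mul_of_nonneg_left g3 hb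
        have h3' : a * tlo + b * tlo = tlo := by linear_combination tlo * hab
        linarith
      · have h1' := mul_le_mul_of_nonneg_left e4 ha
        have h2' := mul_le_mul_of_nonneg_left g4 hb
        have h3' : a * (a1 - F1 / H1up) + b * (a1 - F1 / H1up) = a1 - F1 / H1up := by
          linear_combination (a1 - F1 / H1up) * hab
        linarith
      · -- convexity of F1/(a1 - θ)
        have hub : a * t1 + b * t2 ≤ a1 - F1 / H1up := by
          have h1' := mul_le_mul_of_nonneg_left e4 ha
          have h2' := mul_le_mul_of_nonneg_left g4 hb
          have h3' : a * (a1 - F1 / H1up) + b * (a1 - F1 / H1up) = a1 - F1 / H1up := by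
            linear_combination (a1 - F1 / H1up) * hab
          linarith
        have hc : 0 < a1 - (a * t1 + b * t2) := by linarith
        have key : F1 / (a1 - (a * t1 + b * t2))
            ≤ a * (F1 / (a1 - t1)) + b * (F1 / (a1 - t2)) := by
          have huv : a * (F1 / (a1 - t1)) + b * (F1 / (a1 - t2))
              = (a * F1 * (a1 - t2) + b * F1 * (a1 - t1)) / ((a1 - t1) * (a1 - t2)) := by
            field_simp
          rw [div_le_iff₀ hc, huv, div_mul_eq_mul_div,
            le_div_iff₀ (mul_pos hx hy)]
          have hb' : b = 1 - a := by linarith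
          subst hb'
          nlinarith [mul_nonneg (mul_nonneg (mul_nonneg ha hb) hF1.le)
            (sq_nonneg (t1 - t2))]
        have h5' := mul_le_mul_of_nonneg_left e5 ha
        have g5' := mul_le_mul_of_nonneg_left g5 hb
        linarith
      · -- secant bound is affine, so preserved
        have hrw : ∀ s : ℝ, F1 / (a1 - tlo) + H1up * (s - tlo) / (a1 - tlo)
            = F1 / (a1 - tlo) + H1up / (a1 - tlo) * (s - tlo) := fun s => by ring
        rw [hrw] at e6 g6 ⊢
        have h1' := mul_le_mul_of_nonneg_left e6 ha
        have h2' := mul_le_mul_of_nonneg_left g6 hb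
        have hid : a * (F1 / (a1 - tlo) + H1up / (a1 - tlo) * (t1 - tlo))
            + b * (F1 / (a1 - tlo) + H1up / (a1 - tlo) * (t2 - tlo))
            = F1 / (a1 - tlo) + H1up / (a1 - tlo) * (a * t1 + b * t2 - tlo) := by
          linear_combination (F1 / (a1 - tlo) - H1up / (a1 - tlo) * tlo) * hab
        linarith
  · -- RHS ⊆ hull
    rintro ⟨f, t, Hv, u⟩ ⟨h1, h2, h3, h4, h5, h6⟩
    simp only [Set.mem_setOf_eq] at *
    set S : Set (ℝ × ℝ × ℝ × ℝ) :=
      {p : ℝ × ℝ × ℝ × ℝ |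
        p.1 = F1 ∧ tlo ≤ p.2.1 ∧ p.2.1 ≤ a1 - F1 / H1up ∧
        p.2.2.1 = F1 / (a1 - p.2.1) ∧ p.2.2.2 = F1 * p.2.1} with hS
    have hxt : 0 < a1 - t := hpos t h4
    -- the three generating points
    have hcmem : ((F1, t, F1 / (a1 - t), F1 * t) : ℝ × ℝ × ℝ × ℝ) ∈ S :=
      ⟨rfl, h3, h4, rfl, rfl⟩
    have hlomem : ((F1, tlo, F1 / (a1 - tlo), F1 * tlo) : ℝ × ℝ × ℝ × ℝ) ∈ S :=
      ⟨rfl, le_refl _, htlo, rfl, rfl⟩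
    have hhival : F1 / (a1 - (a1 - F1 / H1up)) = H1up := by
      field_simp
      rw [show a1 * H1up - (a1 * H1up - F1) = F1 by ring, div_self hF1.ne']
    have hhimem : ((F1, a1 - F1 / H1up, H1up, F1 * (a1 - F1 / H1up)) : ℝ × ℝ × ℝ × ℝ) ∈ S :=
      ⟨rfl, htlo, le_refl _, hhival.symm, rfl⟩
    -- the secant point above (t, ...) is a convex combination of the endpoints
    obtain ⟨a, b, ha, hb, hab, habt⟩ := stmt19_seg_coeff h3 h4
    have hqmem : a • ((F1, tlo, F1 / (a1 - tlo), F1 * tlo) : ℝ × ℝ × ℝ × ℝ)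
        + b • ((F1, a1 - F1 / H1up, H1up, F1 * (a1 - F1 / H1up)) : ℝ × ℝ × ℝ × ℝ)
        ∈ convexHull ℝ S :=
      (convex_convexHull ℝ S) (subset_convexHull ℝ S hlomem)
        (subset_convexHull ℝ S hhimem) ha hb hab
    have hqeq : a • ((F1, tlo, F1 / (a1 - tlo), F1 * tlo) : ℝ × ℝ × ℝ × ℝ)
        + b • ((F1, a1 - F1 / H1up, H1up, F1 * (a1 - F1 / H1up)) : ℝ × ℝ × ℝ × ℝ)
        = (F1, t, F1 / (a1 - tlo) + H1up * (t - tlo) / (a1 - tlo), F1 * t) := by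
      simp only [Prod.smul_mk, Prod.mk_add_mk, smul_eq_mul, Prod.mk.injEq]
      refine ⟨by linear_combination F1 * hab, habt, ?_, by linear_combination F1 * habt⟩
      field_simp
      have hFHe : H1up * (F1 / H1up) = F1 := by field_simp
      linear_combination H1up * habt + b * hFHe + (F1 - H1up * tlo) * hab
    rw [hqeq] at hqmem
    -- the point lies between the curve point and the secant point
    obtain ⟨c, d, hc, hd, hcd, hcdH⟩ := stmt19_seg_coeff h5 h6
    have hpeq : c • ((F1, t, F1 / (a1 - t), F1 * t) : ℝ × ℝ × ℝ × ℝ)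
        + d • ((F1, t, F1 / (a1 - tlo) + H1up * (t - tlo) / (a1 - tlo), F1 * t)
          : ℝ × ℝ × ℝ × ℝ)
        = (f, t, Hv, u) := by
      simp only [Prod.smul_mk, Prod.mk_add_mk, smul_eq_mul, Prod.mk.injEq]
      exact ⟨by rw [h1]; linear_combination F1 * hcd,
        by linear_combination t * hcd, hcdH,
        by rw [h2]; linear_combination (F1 * t) * hcd⟩
    rw [← hpeq]
    exact (convex_convexHull ℝ S) (subset_convexHull ℝ S hcmem) hqmem hc hd hcd
end
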